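/- Let r : [λ₁, ∞) → ℝ be C² with r(λ) > 0, r'(λ₁) > 0, and suppose r'' > -C r^{-2} (r')² for a constant C > 0 wherever r' > 0. Then r'(λ) > r'(λ₁) e^{-C/r(λ₁)} for all λ ≥ λ₁, and consequently r(λ) → ∞ as λ → ∞. -/

import Mathlib

/-- If r is C², positive, with r'(lam₁) > 0, and r'' > -C r^{-2}(r')² wherever r' > 0,
then r' stays above r'(lam₁)e^{-C/r(lam₁)} and r diverges to infinity. -/
theorem r_diverges (lam₁ C : ℝ) (hC : 0 < C) (r : ℝ → ℝ) (hr : ContDiff ℝ 2 r)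
    (hpos : ∀ l ∈ Set.Ici lam₁, 0 < r l)
    (hd1 : 0 < deriv r lam₁)
    (hineq : ∀ l ∈ Set.Ici lam₁, 0 < deriv r l →
      deriv (deriv r) l > -C * (r l) ^ (-(2 : ℝ)) * (deriv r l) ^ 2) :
    (∀ l ∈ Set.Ici lam₁, deriv r l > deriv r lam₁ * Real.exp (-C / r lam₁)) ∧
    Filter.Tendsto r Filter.atTop Filter.atTop := by
  have hrd : Differentiable ℝ r := hr.differentiable two_ne_zero
  have hdr : ContDiff ℝ 1 (deriv r) := by
    have h2 : (2 : WithTop ℕ∞) = 1 + 1 := by norm_num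
    exact (contDiff_succ_iff_deriv.mp (h2 ▸ hr)).2.2
  have hdrd : Differentiable ℝ (deriv r) := hdr.differentiable one_ne_zero
  have hdrc : Continuous (deriv r) := hdrd.continuous
  set ε : ℝ := deriv r lam₁ * Real.exp (-C / r lam₁) with hεdef
  have hr₁ : 0 < r lam₁ := hpos lam₁ Set.self_mem_Ici
  have hε : 0 < ε := mul_pos hd1 (Real.exp_pos _)
  have hεlt : ε < deriv r lam₁ := by
    have : Real.exp (-C / r lam₁) < 1 := by
      apply Real.exp_lt_one_iff.mpr
      exact div_neg_of_neg_of_pos (neg_neg_iff_pos.mpr hC) hr₁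
    exact mul_lt_of_lt_one_right hd1 this
  -- main step
  have key : ∀ l ∈ Set.Ici lam₁, ε < deriv r l := by
    by_contra hcon
    push_neg at hcon
    obtain ⟨l₀, hl₀, hl₀'⟩ := hcon
    set S : Set ℝ := {l | lam₁ ≤ l ∧ deriv r l ≤ ε} with hSdef
    have hSne : S.Nonempty := ⟨l₀, hl₀, hl₀'⟩
    have hScl : IsClosed S := by
      apply IsClosed.inter
      · exact isClosed_le continuous_const continuous_id
      · exact isClosed_le hdrc continuous_const
    have hSbdd : BddBelow S := ⟨lam₁, fun x hx => hx.1⟩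
    set μ := sInf S with hμdef
    have hμS : μ ∈ S := hScl.csInf_mem hSne hSbdd
    have hμge : lam₁ ≤ μ := hμS.1
    have hμle : deriv r μ ≤ ε := hμS.2
    have hμgt : lam₁ < μ := by
      rcases lt_or_eq_of_le hμge with h | h
      · exact h
      · exact absurd (h ▸ hμle) (not_le.mpr hεlt)
    have hIco : ∀ l ∈ Set.Ico lam₁ μ, ε < deriv r l := by
      intro l ⟨h1, h2⟩
      by_contra h
      push_neg at h
      exact absurd (csInf_le hSbdd ⟨h1, h⟩) (not_le.mpr h2)
    -- at μ, deriv r μ ≥ ε > 0 by continuity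
    have hμε : ε ≤ deriv r μ := by
      have htend : Filter.Tendsto (deriv r) (nhdsWithin μ (Set.Iio μ))
          (nhds (deriv r μ)) := (hdrc.tendsto μ).mono_left nhdsWithin_le_nhds
      refine ge_of_tendsto htend ?_
      filter_upwards [Ioo_mem_nhdsLT_of_mem ⟨hμgt, le_refl μ⟩] with x hx
      exact (hIco x ⟨hx.1.le, hx.2⟩).le
    have hdμ : 0 < deriv r μ := lt_of_lt_of_le hε hμε
    -- deriv r > 0 and r > 0 on Icc lam₁ μ
    have hdpos : ∀ l ∈ Set.Icc lam₁ μ, 0 < deriv r l := by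
      intro l ⟨h1, h2⟩
      rcases lt_or_eq_of_le h2 with h | h
      · exact lt_trans hε (hIco l ⟨h1, h⟩)
      · exact h ▸ hdμ
    have hrpos : ∀ l ∈ Set.Icc lam₁ μ, 0 < r l := fun l hl => hpos l hl.1
    set g : ℝ → ℝ := fun l => Real.log (deriv r l) - C / r l with hgdef
    have hgderiv : ∀ x ∈ Set.Icc lam₁ μ, HasDerivAt g
        (deriv (deriv r) x / deriv r x + C * deriv r x / (r x) ^ 2) x := by
      intro x hx
      have hpx : 0 < deriv r x := hdpos x hx
      have hqx : 0 < r x := hrpos x hx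
      have h1 : HasDerivAt (fun l => Real.log (deriv r l))
          (deriv (deriv r) x / deriv r x) x :=
        ((hdrd x).hasDerivAt).log hpx.ne'
      have h2 : HasDerivAt (fun l => C / r l)
          ((0 * r x - C * deriv r x) / (r x) ^ 2) x :=
        (hasDerivAt_const x C).div ((hrd x).hasDerivAt) hqx.ne'
      have := h1.sub h2
      refine this.congr_deriv ?_
      ring
    have hgpos : ∀ x ∈ Set.Ioo lam₁ μ, 0 < deriv g x := by
      intro x hx
      have hx' : x ∈ Set.Icc lam₁ μ := Set.Ioo_subset_Icc_self hx
      rw [(hgderiv x hx').deriv]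
      have hpx : 0 < deriv r x := hdpos x hx'
      have hqx : 0 < r x := hrpos x hx'
      have hiq := hineq x (le_of_lt hx.1) hpx
      have hrp : (r x) ^ (-(2 : ℝ)) = ((r x) ^ 2)⁻¹ := by
        rw [Real.rpow_neg hqx.le, show ((2:ℝ)) = ((2:ℕ):ℝ) by norm_num,
          Real.rpow_natCast]
      rw [hrp] at hiq
      have hq2 : (0:ℝ) < (r x) ^ 2 := by positivity
      have hnum : 0 < deriv (deriv r) x * (r x) ^ 2 + C * (deriv r x) ^ 2 := by
        have hmul := mul_lt_mul_of_pos_right hiq hq2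
        have hcancel : -C * ((r x) ^ 2)⁻¹ * (deriv r x) ^ 2 * (r x) ^ 2
            = -C * (deriv r x) ^ 2 := by
          field_simp
        rw [hcancel] at hmul
        linarith
      have : deriv (deriv r) x / deriv r x + C * deriv r x / (r x) ^ 2 =
          (deriv (deriv r) x * (r x) ^ 2 + C * (deriv r x) ^ 2) / (deriv r x * (r x) ^ 2) := by
        field_simp
      rw [this]
      exact div_pos hnum (by positivity)
    have hgcont : ContinuousOn g (Set.Icc lam₁ μ) := by
      apply ContinuousOn.sub
      · exact ContinuousOn.log hdrc.continuousOn (fun x hx => (hdpos x hx).ne')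
      · exact continuousOn_const.div hrd.continuous.continuousOn
          (fun x hx => (hrpos x hx).ne')
    have hmono : StrictMonoOn g (Set.Icc lam₁ μ) := by
      apply strictMonoOn_of_deriv_pos (convex_Icc lam₁ μ) hgcont
      intro x hx
      rw [interior_Icc] at hx
      exact hgpos x hx
    have hglt : g lam₁ < g μ :=
      hmono (Set.left_mem_Icc.mpr hμgt.le) (Set.right_mem_Icc.mpr hμgt.le) hμgt
    -- unpack: log (deriv r μ) > log (deriv r lam₁) - C / r lam₁
    have hrμ : 0 < r μ := hrpos μ (Set.right_mem_Icc.mpr hμgt.le)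
    have hCrμ : 0 < C / r μ := div_pos hC hrμ
    have hlog : Real.log (deriv r lam₁) - C / r lam₁ < Real.log (deriv r μ) := by
      have h1 : Real.log (deriv r lam₁) - C / r lam₁
          < Real.log (deriv r μ) - C / r μ := hglt
      linarith
    have hεlog : Real.log ε = Real.log (deriv r lam₁) - C / r lam₁ := by
      rw [hεdef, Real.log_mul hd1.ne' (Real.exp_pos _).ne', Real.log_exp, neg_div,
        ← sub_eq_add_neg]
    have : ε < deriv r μ := by
      have := hεlog ▸ hlog
      exact (Real.log_lt_log_iff hε hdμ).mp this
    exact absurd hμle (not_le.mpr this)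
  refine ⟨key, ?_⟩
  -- linear lower bound ⇒ divergence
  have hlin : ∀ l, lam₁ ≤ l → r lam₁ + ε * (l - lam₁) ≤ r l := by
    intro l hl
    have := Convex.mul_sub_le_image_sub_of_le_deriv (convex_Ici lam₁)
      (hrd.continuous.continuousOn) (hrd.differentiableOn)
      (f := r) (C := ε)
      (fun x hx => (key x (interior_subset hx)).le)
      lam₁ Set.self_mem_Ici l hl hl
    linarith
  have h1 : Filter.Tendsto (fun l => r lam₁ + ε * (l - lam₁))
      Filter.atTop Filter.atTop := by
    apply Filter.tendsto_atTop_add_const_left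
    apply Filter.Tendsto.const_mul_atTop hε
    simpa [sub_eq_add_neg] using
      Filter.tendsto_atTop_add_const_right Filter.atTop (-lam₁) Filter.tendsto_id
  have hev : (fun l => r lam₁ + ε * (l - lam₁)) ≤ᶠ[Filter.atTop] r := by
    filter_upwards [Filter.eventually_ge_atTop lam₁] with l hl
    exact hlin l hl
  exact Filter.tendsto_atTop_mono' Filter.atTop hev h1
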